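/- Let 1 ≤ p < ∞ and suppose (y_{i,j}) for 1 ≤ i ≤ m, 1 ≤ j ≤ n_i + 1 are vectors with δ ≤ ∥y_{i,j}∥ ≤ δ + δ' for j ≤ n_i and ∥y_{i,n_i+1}∥ < δ, where a_i y_i = ∑_{j=1}^{n_i+1} y_{i,j} with ∥y_i∥ = 1. If for every collection of N (= ∑ n_i) successive normalized blocks one has the two-sided estimate ∥∑ z_j∥ ∼_K (number of terms)^{1/p}·(common norm) (valid for N < N'), then |a_i| > (δ/(2K)) n_i^{1/p} and |a_i| < 2δK n_i^{1/p} whenever |a_i| ≥ ε, under the parameter constraints ε < 1/(8m(2K)^{2p}), δ = ε/(4Km), N' > 2m(2K/δ)^p, δ' < δ/(2KN'). -/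

import Mathlib

/-- A finite family of finitely supported vectors is successive if their
supports are strictly increasing. -/
def Successive {t : ℕ} (z : Fin t → (ℕ →₀ ℝ)) : Prop :=
  ∀ j j' : Fin t, j < j' → ∀ s ∈ (z j).support, ∀ u ∈ (z j').support, s < u

section Aux

variable {Nn : (ℕ →₀ ℝ) → ℝ}
  (hadd : ∀ u v : ℕ →₀ ℝ, Nn (u + v) ≤ Nn u + Nn v)
  (hhom : ∀ (c : ℝ) (u : ℕ →₀ ℝ), Nn (c • u) = |c| * Nn u)

include hhom in
lemma nn_zero : Nn 0 = 0 := by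
  have h := hhom 0 0
  simpa using h

include hhom in
lemma nn_neg (u : ℕ →₀ ℝ) : Nn (-u) = Nn u := by
  have h := hhom (-1) u
  simpa using h

include hadd hhom in
lemma nn_sum_le {ι : Type*} (s : Finset ι) (f : ι → (ℕ →₀ ℝ)) :
    Nn (∑ j ∈ s, f j) ≤ ∑ j ∈ s, Nn (f j) := by
  classical
  induction s using Finset.cons_induction with
  | empty => simp [nn_zero hhom]
  | cons a s ha ih =>
    simp only [Finset.sum_cons]
    exact le_trans (hadd _ _) (by linarith)

include hadd hhom in
lemma nn_le_add (u v : ℕ →₀ ℝ) : Nn u ≤ Nn (u + v) + Nn v := by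
  have h := hadd (u + v) (-v)
  simpa [nn_neg hhom] using h

include hadd hhom in
lemma pert (p K δ δ' : ℝ) (N' : ℕ) (hδpos : 0 < δ)
    (hblock : ∀ t : ℕ, (t : ℝ) < N' → ∀ z : Fin t → (ℕ →₀ ℝ), Successive z →
      (∀ j, Nn (z j) = 1) →
      (t : ℝ) ^ (1 / p) / K ≤ Nn (∑ j, z j) ∧ Nn (∑ j, z j) ≤ K * (t : ℝ) ^ (1 / p))
    (T : ℕ) (hT : (T : ℝ) < N') (c : Fin T → (ℕ →₀ ℝ)) (hcs : Successive c)
    (hcb : ∀ j, δ ≤ Nn (c j) ∧ Nn (c j) < δ + δ') :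
    δ * (T : ℝ) ^ (1 / p) / K - T * δ' ≤ Nn (∑ j, c j) ∧
      Nn (∑ j, c j) ≤ δ * K * (T : ℝ) ^ (1 / p) + T * δ' := by
  classical
  set z : Fin T → (ℕ →₀ ℝ) := fun j => (Nn (c j))⁻¹ • c j with hzdef
  have hr : ∀ j, 0 < Nn (c j) := fun j => lt_of_lt_of_le hδpos (hcb j).1
  have hz1 : ∀ j, Nn (z j) = 1 := by
    intro j
    rw [hzdef, hhom, abs_of_pos (inv_pos.2 (hr j)), inv_mul_cancel₀ (hr j).ne']
  have hzs : Successive z := by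
    intro j j' hjj' s hs u hu
    exact hcs j j' hjj' s (Finsupp.support_smul hs) u (Finsupp.support_smul hu)
  have hb := hblock T hT z hzs hz1
  have hcz : ∀ j, c j = δ • z j + (Nn (c j) - δ) • z j := by
    intro j
    rw [← add_smul, add_sub_cancel, hzdef, smul_smul, mul_inv_cancel₀ (hr j).ne', one_smul]
  have hsplit : ∑ j, c j = δ • (∑ j, z j) + ∑ j, (Nn (c j) - δ) • z j := by
    rw [Finset.smul_sum, ← Finset.sum_add_distrib]
    exact Finset.sum_congr rfl fun j _ => hcz j
  have hE : Nn (∑ j, (Nn (c j) - δ) • z j) ≤ T * δ' := by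
    refine le_trans (nn_sum_le hadd hhom _ _) ?_
    have h1 : ∀ j ∈ Finset.univ, Nn ((Nn (c j) - δ) • z j) ≤ δ' := by
      intro j _
      rw [hhom, hz1, mul_one, abs_of_nonneg (by linarith [(hcb j).1])]
      linarith [(hcb j).2]
    calc ∑ j, Nn ((Nn (c j) - δ) • z j) ≤ ∑ _j : Fin T, δ' := Finset.sum_le_sum h1
      _ = T * δ' := by simp [mul_comm]
  have hδS : Nn (δ • ∑ j, z j) = δ * Nn (∑ j, z j) := by
    rw [hhom, abs_of_pos hδpos]
  constructor
  · have h1 : Nn (δ • ∑ j, z j) ≤ Nn (∑ j, c j) + T * δ' := by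
      have h2 := nn_le_add hadd hhom (δ • ∑ j, z j) (∑ j, (Nn (c j) - δ) • z j)
      rw [← hsplit] at h2
      linarith
    have h2 : δ * ((T : ℝ) ^ (1 / p) / K) ≤ δ * Nn (∑ j, z j) :=
      mul_le_mul_of_nonneg_left hb.1 hδpos.le
    have h3 : δ * ((T : ℝ) ^ (1 / p) / K) = δ * (T : ℝ) ^ (1 / p) / K := by ring
    linarith [hδS]
  · have h1 : Nn (∑ j, c j) ≤ Nn (δ • ∑ j, z j) + T * δ' := by
      rw [hsplit]
      linarith [hadd (δ • ∑ j, z j) (∑ j, (Nn (c j) - δ) • z j)]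
    have h2 : δ * Nn (∑ j, z j) ≤ δ * (K * (T : ℝ) ^ (1 / p)) :=
      mul_le_mul_of_nonneg_left hb.2 hδpos.le
    have h3 : δ * (K * (T : ℝ) ^ (1 / p)) = δ * K * (T : ℝ) ^ (1 / p) := by ring
    linarith [hδS]

end Aux

set_option maxHeartbeats 1000000 in
/-- estimates (3.16) and (3.17) of the proof of Theorem 3.7.
In a space (here: `c₀₀` with a norm `Nn` that is subadditive, absolutely
homogeneous and bimonotone) in which every family of `t < N'` successive
normalized blocks satisfies `K⁻¹ t^{1/p} ≤ ‖∑ z_j‖ ≤ K t^{1/p}`, if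
`a_i y_i = ∑_{j=1}^{n_i+1} y_{i,j}` with `‖y_i‖ = 1`, `δ ≤ ‖y_{i,j}‖ < δ + δ'`
for `j ≤ n_i` and `‖y_{i,n_i+1}‖ < δ`, and `∑ |a_i|^p = 1`, then under the
parameter constraints `ε < 1/(8m(2K)^{2p})`, `δ = ε/(4Km)`, `N' > 2m(2K/δ)^p`,
`δ' < δ/(2KN')`, one has for each `i` with `|a_i| ≥ ε` that `n_i ≥ 1` and
`(δ/(2K)) n_i^{1/p} < |a_i| < 2δK n_i^{1/p}`. -/
theorem stmt17 (p K ε δ δ' : ℝ) (m N' : ℕ) (Nn : (ℕ →₀ ℝ) → ℝ)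
    (hp : 1 ≤ p) (hK : 2 < K) (hm : 1 ≤ m)
    (hε : 0 < ε) (hεb : ε < 1 / (8 * m * (2 * K) ^ (2 * p)))
    (hδ : δ = ε / (4 * K * m))
    (hN' : 2 * m * (2 * K / δ) ^ p < (N' : ℝ))
    (hδ'0 : 0 < δ') (hδ' : δ' < δ / (2 * K * N'))
    (hadd : ∀ u v : ℕ →₀ ℝ, Nn (u + v) ≤ Nn u + Nn v)
    (hhom : ∀ (c : ℝ) (u : ℕ →₀ ℝ), Nn (c • u) = |c| * Nn u)
    (hmono : ∀ (u : ℕ →₀ ℝ) (k : ℕ),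
      Nn (u.filter (fun s => s < k)) ≤ Nn u ∧ Nn (u.filter (fun s => k ≤ s)) ≤ Nn u)
    (hblock : ∀ t : ℕ, (t : ℝ) < N' → ∀ z : Fin t → (ℕ →₀ ℝ), Successive z →
      (∀ j, Nn (z j) = 1) →
      (t : ℝ) ^ (1 / p) / K ≤ Nn (∑ j, z j) ∧ Nn (∑ j, z j) ≤ K * (t : ℝ) ^ (1 / p))
    (a : Fin m → ℝ) (ha : ∑ i, |a i| ^ p = 1)
    (y : Fin m → (ℕ →₀ ℝ)) (hy : ∀ i, Nn (y i) = 1)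
    (n : Fin m → ℕ)
    (yb : ∀ i : Fin m, Fin (n i + 1) → (ℕ →₀ ℝ))
    (hsum : ∀ i, a i • y i = ∑ j, yb i j)
    (hsucc : ∀ i, Successive (yb i))
    (hnb : ∀ (i : Fin m) (j : Fin (n i + 1)), (j : ℕ) < n i →
      δ ≤ Nn (yb i j) ∧ Nn (yb i j) < δ + δ')
    (hlast : ∀ i : Fin m, Nn (yb i (Fin.last (n i))) < δ) :
    ∀ i : Fin m, ε ≤ |a i| →
      1 ≤ n i ∧ (δ / (2 * K)) * (n i : ℝ) ^ (1 / p) < |a i| ∧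
        |a i| < 2 * δ * K * (n i : ℝ) ^ (1 / p) := by
  intro i hi
  classical
  have hK0 : (0:ℝ) < K := by linarith
  have h2K : (0:ℝ) < 2 * K := by linarith
  have hp0 : (0:ℝ) < p := by linarith
  have hm1 : (1:ℝ) ≤ (m:ℝ) := by exact_mod_cast hm
  have hδpos : 0 < δ := by
    rw [hδ]
    have : (0:ℝ) < 4 * K * m := by nlinarith
    positivity
  have hKp1 : (1:ℝ) ≤ (2 * K) ^ (2 * p) := Real.one_le_rpow (by linarith) (by linarith)
  have hε1 : ε < 1 := by
    have hmY : (1:ℝ) ≤ (m:ℝ) * (2 * K) ^ (2 * p) := by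
      have := mul_le_mul hm1 hKp1 (by norm_num) (by linarith)
      linarith
    have h8 : (8:ℝ) ≤ 8 * m * (2 * K) ^ (2 * p) := by nlinarith
    have h9 : 1 / (8 * (m:ℝ) * (2 * K) ^ (2 * p)) ≤ 1 / 8 :=
      one_div_le_one_div_of_le (by norm_num) h8
    linarith
  have hmne : (m:ℝ) ≠ 0 := by positivity
  have hεeq : ε = 4 * K * m * δ := by
    rw [hδ]; field_simp
  have hδε : δ < ε := by
    have h1 : (1:ℝ) < 4 * K * m := by nlinarith
    nlinarith [mul_lt_mul_of_pos_right h1 hδpos]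
  have hδ1 : δ < 1 := by linarith
  have hε8 : 8 * δ < ε := by
    have hKm : (2:ℝ) < K * m := by nlinarith
    nlinarith [mul_pos hδpos (sub_pos.2 hKm)]
  have hXpos : (0:ℝ) < (2 * K / δ) ^ p := Real.rpow_pos_of_pos (by positivity) p
  have hN'0 : (0:ℝ) < (N' : ℝ) := lt_trans (by nlinarith) hN'
  have hN'nat : 0 < N' := by exact_mod_cast hN'0
  have hN'δ' : (N' : ℝ) * δ' < δ / (2 * K) := by
    have h := mul_lt_mul_of_pos_left hδ' hN'0
    have he : (N' : ℝ) * (δ / (2 * K * N')) = δ / (2 * K) := by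
      field_simp
    rw [he] at h
    linarith
  have h2Kδ1 : (1:ℝ) ≤ 2 * K / δ := (one_le_div hδpos).2 (by linarith)
  have hpow1 : (1:ℝ) ≤ (2 * K / δ) ^ p := Real.one_le_rpow h2Kδ1 (by linarith)
  have haipos : 0 < |a i| := lt_of_lt_of_le hε hi
  have hai1 : |a i| ≤ 1 := by
    have hple : |a i| ^ p ≤ 1 := by
      rw [← ha]
      exact Finset.single_le_sum (fun j _ => Real.rpow_nonneg (abs_nonneg _) p)
        (Finset.mem_univ i)
    by_contra h
    push_neg at h
    have : 1 < |a i| ^ p :=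
      (Real.one_lt_rpow_iff_of_pos haipos).2 (Or.inl ⟨h, hp0⟩)
    linarith
  -- Step A : n i < N'
  have hNpN' : n i < N' := by
    by_contra hcon
    push_neg at hcon
    set T : ℕ := N' - 1 with hTdef
    have hTN' : T + 1 = N' := Nat.succ_pred_eq_of_pos hN'nat
    have hTltN' : T < N' := by omega
    have hTltNp : T < n i := by omega
    have hTR : (T : ℝ) < N' := by exact_mod_cast hTltN'
    set c : Fin T → (ℕ →₀ ℝ) :=
      fun j => yb i ⟨j, Nat.lt_trans j.isLt (by omega)⟩ with hcdef
    have hcs : Successive c := by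
      intro j j' hjj' s hs u hu
      exact hsucc i _ _ (Fin.mk_lt_mk.2 hjj') s hs u hu
    have hcb : ∀ j, δ ≤ Nn (c j) ∧ Nn (c j) < δ + δ' := fun j =>
      hnb i _ (lt_trans j.isLt hTltNp)
    have hpert := pert hadd hhom p K δ δ' N' hδpos hblock T hTR c hcs hcb
    have hTmem : T < n i + 1 := by omega
    set jT : Fin (n i + 1) := ⟨T, hTmem⟩ with hjT
    have hjTnorm := hnb i jT hTltNp
    have hjTne : (yb i jT).support.Nonempty := by
      rw [Finset.nonempty_iff_ne_empty]
      intro hemp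
      have h0 : yb i jT = 0 := Finsupp.support_eq_empty.1 hemp
      rw [h0, nn_zero hhom] at hjTnorm
      linarith [hjTnorm.1]
    set k : ℕ := (yb i jT).support.min' hjTne with hk
    have hkmem : k ∈ (yb i jT).support := Finset.min'_mem _ _
    have hfil : Finsupp.filter (fun s => s < k) (∑ j, yb i j) = ∑ j, c j := by
      rw [Finsupp.filter_sum]
      set g : ℕ → (ℕ →₀ ℝ) := fun t =>
        if h : t < n i + 1 then Finsupp.filter (fun s => s < k) (yb i ⟨t, h⟩) else 0
        with hg
      have e1 : ∑ j : Fin (n i + 1), Finsupp.filter (fun s => s < k) (yb i j) =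
          ∑ t ∈ Finset.range (n i + 1), g t := by
        rw [← Fin.sum_univ_eq_sum_range g (n i + 1)]
        refine Finset.sum_congr rfl fun j _ => ?_
        simp [hg, j.isLt, not_lt.2 (Fin.is_le j)]
      have e2 : ∀ t ∈ Finset.range (n i + 1), t ∉ Finset.range T → g t = 0 := by
        intro t ht hnt
        rw [Finset.mem_range] at ht
        rw [Finset.mem_range, not_lt] at hnt
        rw [hg]
        simp only [dif_pos ht]
        rw [Finsupp.filter_eq_zero_iff]
        intro x hx
        by_contra hx0
        have hxmem : x ∈ (yb i ⟨t, ht⟩).support := Finsupp.mem_support_iff.2 hx0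
        rcases eq_or_lt_of_le hnt with he | hl
        · subst he
          exact absurd hx (not_lt.2 (Finset.min'_le _ _ hxmem))
        · have hlt : jT < (⟨t, ht⟩ : Fin (n i + 1)) := Fin.mk_lt_mk.2 hl
          have := hsucc i jT ⟨t, ht⟩ hlt k hkmem x hxmem
          omega
      have e3 : ∑ t ∈ Finset.range (n i + 1), g t = ∑ t ∈ Finset.range T, g t :=
        (Finset.sum_subset (Finset.range_subset_range.2 (by omega)) e2).symm
      have e4 : ∑ t ∈ Finset.range T, g t = ∑ j, c j := by
        rw [← Fin.sum_univ_eq_sum_range g T]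
        refine Finset.sum_congr rfl fun j _ => ?_
        have hjlt : (j : ℕ) < n i + 1 := Nat.lt_trans j.isLt (by omega)
        rw [hg]
        simp only [dif_pos hjlt]
        have hself : Finsupp.filter (fun s => s < k) (yb i ⟨(j:ℕ), hjlt⟩) =
            yb i ⟨(j:ℕ), hjlt⟩ := by
          rw [Finsupp.filter_eq_self_iff]
          intro x hx
          have hxmem : x ∈ (yb i ⟨(j:ℕ), hjlt⟩).support := Finsupp.mem_support_iff.2 hx
          exact hsucc i ⟨(j:ℕ), hjlt⟩ jT (Fin.mk_lt_mk.2 j.isLt) x hxmem k hkmem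
        rw [hself, hcdef]
      rw [e1, e3, e4]
    have hNa : Nn (∑ j : Fin (n i + 1), yb i j) = |a i| := by
      rw [← hsum i, hhom, hy, mul_one]
    have hmain : Nn (∑ j, c j) ≤ 1 := by
      have h1 := (hmono (∑ j, yb i j) k).1
      rw [hfil, hNa] at h1
      linarith
    have hTge : (2 * K / δ) ^ p ≤ (T : ℝ) := by
      have hcast := congrArg (Nat.cast : ℕ → ℝ) hTN'
      push_cast at hcast
      have hh : (2 * (m:ℝ) - 1) * 1 ≤ (2 * m - 1) * ((2 * K / δ) ^ p) :=
        mul_le_mul_of_nonneg_left hpow1 (by linarith)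
      linarith [hh, hN', hm1, hcast]
    have hTp : 2 * K / δ ≤ (T : ℝ) ^ (1 / p) := by
      have h0 : (0:ℝ) ≤ 2 * K / δ := by positivity
      have h1 : ((2 * K / δ) ^ p) ^ (1 / p) ≤ (T : ℝ) ^ (1 / p) :=
        Real.rpow_le_rpow (Real.rpow_nonneg h0 p) hTge (by positivity)
      rwa [← Real.rpow_mul h0, mul_one_div, div_self hp0.ne', Real.rpow_one] at h1
    have hlow : 2 ≤ δ * (T : ℝ) ^ (1 / p) / K := by
      rw [le_div_iff₀ hK0]
      have h1 := mul_le_mul_of_nonneg_left hTp hδpos.le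
      have he : δ * (2 * K / δ) = 2 * K := by field_simp
      nlinarith
    have hTδ' : (T : ℝ) * δ' ≤ (N' : ℝ) * δ' :=
      mul_le_mul_of_nonneg_right (by exact_mod_cast hTltN'.le) hδ'0.le
    have hfrac : δ / (2 * K) < 1 := by
      rw [div_lt_one h2K]; linarith
    linarith [hpert.1, hTδ']
  -- Step B
  have hNR : ((n i : ℕ) : ℝ) < N' := by exact_mod_cast hNpN'
  set c : Fin (n i) → (ℕ →₀ ℝ) := fun j => yb i j.castSucc with hcdef
  have hcs : Successive c := by
    intro j j' h s hs u hu
    exact hsucc i _ _ (Fin.castSucc_lt_castSucc_iff.2 h) s hs u hu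
  have hcb : ∀ j, δ ≤ Nn (c j) ∧ Nn (c j) < δ + δ' := fun j =>
    hnb i j.castSucc (by simpa using j.isLt)
  have hpert := pert hadd hhom p K δ δ' N' hδpos hblock (n i) hNR c hcs hcb
  have hsplit : ∑ j : Fin (n i + 1), yb i j =
      (∑ j : Fin (n i), c j) + yb i (Fin.last (n i)) := by
    rw [Fin.sum_univ_castSucc]
  have hNa : Nn (∑ j : Fin (n i + 1), yb i j) = |a i| := by
    rw [← hsum i, hhom, hy, mul_one]
  have hub : |a i| < Nn (∑ j, c j) + δ := by
    have h1 := hadd (∑ j, c j) (yb i (Fin.last (n i)))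
    rw [← hsplit, hNa] at h1
    linarith [hlast i]
  have hlb : Nn (∑ j, c j) < |a i| + δ := by
    have h1 := nn_le_add hadd hhom (∑ j, c j) (yb i (Fin.last (n i)))
    rw [← hsplit, hNa] at h1
    linarith [hlast i]
  have hn1 : 1 ≤ n i := by
    by_contra hcon
    have h0 : n i = 0 := by omega
    have hz : ((n i : ℕ) : ℝ) = 0 := by rw [h0]; norm_num
    have hS0 : Nn (∑ j, c j) ≤ 0 := by
      have h2 := hpert.2
      rw [hz, Real.zero_rpow (one_div_ne_zero hp0.ne')] at h2
      simpa using h2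
    linarith
  have hX1 : 1 ≤ ((n i : ℕ) : ℝ) ^ (1 / p) :=
    Real.one_le_rpow (by exact_mod_cast hn1) (by positivity)
  have hNδ' : ((n i : ℕ) : ℝ) * δ' < δ / (2 * K) := by
    have h1 : ((n i : ℕ) : ℝ) * δ' ≤ (N' : ℝ) * δ' :=
      mul_le_mul_of_nonneg_right hNR.le hδ'0.le
    linarith
  refine ⟨hn1, ?_, ?_⟩
  · have key : δ * ((n i : ℕ) : ℝ) ^ (1 / p) / K - δ / (2 * K) - δ < |a i| := by
      linarith [hpert.1]
    rcases le_or_gt (1 + 2 * K) (((n i : ℕ) : ℝ) ^ (1 / p)) with hc | hc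
    · rw [div_mul_eq_mul_div, div_lt_iff₀ h2K]
      have h1 : δ * (1 + 2 * K) ≤ δ * ((n i : ℕ) : ℝ) ^ (1 / p) :=
        mul_le_mul_of_nonneg_left hc hδpos.le
      have h2 : 2 * K * (δ * ((n i : ℕ) : ℝ) ^ (1 / p) / K - δ / (2 * K) - δ) =
          2 * (δ * ((n i : ℕ) : ℝ) ^ (1 / p)) - δ - 2 * K * δ := by
        field_simp
      have h3 := mul_lt_mul_of_pos_left key h2K
      rw [h2] at h3
      nlinarith
    · have h1 : δ / (2 * K) * (((n i : ℕ) : ℝ) ^ (1 / p)) < δ / (2 * K) * (1 + 2 * K) :=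
        mul_lt_mul_of_pos_left hc (by positivity)
      have h2 : δ / (2 * K) * (1 + 2 * K) = δ / (2 * K) + δ := by
        field_simp
      have h3 : δ / (2 * K) < δ := div_lt_self hδpos (by linarith)
      rw [h2] at h1
      linarith
  · have key : |a i| < δ * K * ((n i : ℕ) : ℝ) ^ (1 / p) + δ / (2 * K) + δ := by
      linarith [hpert.2]
    have h1 : δ * K * 1 ≤ δ * K * ((n i : ℕ) : ℝ) ^ (1 / p) :=
      mul_le_mul_of_nonneg_left hX1 (by positivity)
    have h3 : δ / (2 * K) < δ := div_lt_self hδpos (by linarith)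
    nlinarith
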